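/- Let r be a rational number with r > 1. Then 1/(1−r) < 0, and if [r_0, ..., r_n] is the unique admissible NCF expansion of 1/(1−r), then |r_0 (r_1+1) ⋯ (r_n+1)| = Φ(r). -/

import Mathlib

/-- The negative continued fraction (NCF) value of a list of integers:
`ncfVal [rₙ] = rₙ` and `ncfVal (rₖ :: l) = rₖ - 1 / ncfVal l`.
(Junk value `0` for the empty list; recall division by zero in `ℚ` is `0`,
so the value is "well defined" precisely when all proper tails have nonzero value.) -/
def ncfVal : List ℤ → ℚ
  | [] => 0
  | [r] => (r : ℚ)
  | r :: s :: l => (r : ℚ) - 1 / ncfVal (s :: l)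

/-- A list `[r₀, …, rₙ]` is admissible if `r₀ ≤ -1` and `rᵢ ≤ -2` for `1 ≤ i ≤ n`. -/
def Admissible : List ℤ → Prop
  | [] => False
  | r :: l => r ≤ -1 ∧ ∀ s ∈ l, s ≤ -2

/-- `ncfWeight [r₀, …, rₙ] = |r₀ (r₁+1) ⋯ (rₙ+1)|`. -/
def ncfWeight : List ℤ → ℤ
  | [] => 0
  | r :: l => |r * (l.map (· + 1)).prod|

lemma ncfVal_cons_cons (r s : ℤ) (l : List ℤ) :
    ncfVal (r :: s :: l) = (r : ℚ) - 1 / ncfVal (s :: l) := rfl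

lemma ncfVal_singleton (r : ℤ) : ncfVal [r] = (r : ℚ) := rfl

lemma one_div_mem {t : ℚ} (ht : t < -1) : -1 < 1 / t ∧ 1 / t < 0 := by
  constructor
  · rw [lt_div_iff_of_neg (by linarith : t < 0)]; linarith
  · exact div_neg_of_pos_of_neg one_pos (by linarith)

lemma tail_val_lt_neg_one : ∀ l : List ℤ, (∀ s ∈ l, s ≤ -2) → l ≠ [] → ncfVal l < -1 := by
  intro l
  induction l with
  | nil => intro _ h; exact absurd rfl h
  | cons a l ih =>
    intro h2 _
    rcases l with _ | ⟨b, l⟩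
    · have ha : a ≤ -2 := h2 a (by simp)
      rw [ncfVal_singleton]
      have : (a:ℚ) ≤ -2 := by exact_mod_cast ha
      linarith
    · have ht : ncfVal (b :: l) < -1 :=
        ih (fun s hs => h2 s (List.mem_cons_of_mem _ hs)) (by simp)
      have hb := one_div_mem ht
      have ha : (a : ℚ) ≤ -2 := by exact_mod_cast h2 a (by simp)
      rw [ncfVal_cons_cons]
      linarith [hb.1, hb.2]

lemma head_bounds (a b : ℤ) (l : List ℤ) (h2 : ∀ s ∈ b :: l, s ≤ -2) :
    (a : ℚ) < ncfVal (a :: b :: l) ∧ ncfVal (a :: b :: l) < a + 1 := by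
  have ht := tail_val_lt_neg_one (b :: l) h2 (by simp)
  have hb := one_div_mem ht
  rw [ncfVal_cons_cons]
  constructor <;> linarith [hb.1, hb.2]

theorem ncf_unique : ∀ L L' : List ℤ, Admissible L → Admissible L' →
    ncfVal L = ncfVal L' → L = L' := by
  intro L
  induction L with
  | nil => intro L' h; exact h.elim
  | cons a l ih =>
    intro L' hL hL' hv
    obtain ⟨ha, hl⟩ := hL
    rcases L' with _ | ⟨a', l'⟩
    · exact hL'.elim
    obtain ⟨ha', hl'⟩ := hL'
    rcases l with _ | ⟨b, l⟩ <;> rcases l' with _ | ⟨b', l'⟩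
    · rw [ncfVal_singleton, ncfVal_singleton] at hv
      have : a = a' := by exact_mod_cast hv
      rw [this]
    · have hb := head_bounds a' b' l' hl'
      rw [← hv, ncfVal_singleton] at hb
      have h1 : (a' : ℚ) < a := hb.1
      have h2 : (a : ℚ) < a' + 1 := hb.2
      have h1' : a' < a := by exact_mod_cast h1
      have h2' : a < a' + 1 := by exact_mod_cast h2
      omega
    · have hb := head_bounds a b l hl
      rw [hv, ncfVal_singleton] at hb
      have h1' : a < a' := by exact_mod_cast hb.1
      have h2' : a' < a + 1 := by exact_mod_cast hb.2
      omega
    · have hb := head_bounds a b l hl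
      have hb' := head_bounds a' b' l' hl'
      have haa : a = a' := by
        have h1 : (a : ℚ) < a' + 1 := by linarith [hb.1, hb'.2, hv.le, hv.ge]
        have h2 : (a' : ℚ) < a + 1 := by linarith [hb'.1, hb.2, hv.le, hv.ge]
        have h1' : a < a' + 1 := by exact_mod_cast h1
        have h2' : a' < a + 1 := by exact_mod_cast h2
        omega
      subst haa
      have ht : ncfVal (b :: l) < -1 := tail_val_lt_neg_one _ hl (by simp)
      have ht' : ncfVal (b' :: l') < -1 := tail_val_lt_neg_one _ hl' (by simp)
      rw [ncfVal_cons_cons, ncfVal_cons_cons] at hv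
      have hdiv : (ncfVal (b :: l))⁻¹ = (ncfVal (b' :: l'))⁻¹ := by
        have : 1 / ncfVal (b :: l) = 1 / ncfVal (b' :: l') := by linarith
        rw [one_div, one_div] at this
        exact this
      have hteq : ncfVal (b :: l) = ncfVal (b' :: l') := inv_injective hdiv
      have htl := ih (b' :: l')
        ⟨by have := hl b (by simp); omega, fun s hs => hl s (List.mem_cons_of_mem _ hs)⟩
        ⟨by have := hl' b' (by simp); omega, fun s hs => hl' s (List.mem_cons_of_mem _ hs)⟩
        hteq
      rw [htl]

lemma den_sub_intCast (v : ℚ) (n : ℤ) : (v - (n : ℚ)).den = v.den := by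
  have hden : ((v.den : ℤ) : ℚ) ≠ 0 := by exact_mod_cast v.den_nz
  have hnum : (v.num : ℚ) = v * v.den := by
    have hden' : (v.den : ℚ) ≠ 0 := by exact_mod_cast v.den_nz
    have h0 := Rat.num_div_den v
    rw [div_eq_iff hden'] at h0
    exact_mod_cast h0
  have h : v - (n : ℚ) = ((v.num - n * v.den : ℤ) : ℚ) / ((v.den : ℤ) : ℚ) := by
    rw [eq_div_iff hden]
    push_cast
    rw [hnum]; ring
  have h1 : IsCoprime v.num (v.den : ℤ) := Int.isCoprime_iff_gcd_eq_one.mpr v.reduced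
  have h2 := h1.add_mul_left_left (-n)
  have h3 : v.num + (v.den : ℤ) * (-n) = v.num - n * v.den := by ring
  rw [h3] at h2
  have hcop : Nat.Coprime (v.num - n * v.den).natAbs ((v.den : ℤ)).natAbs :=
    Int.isCoprime_iff_gcd_eq_one.mp h2
  have := Rat.den_div_eq_of_coprime (a := v.num - n * v.den) (b := (v.den : ℤ))
    (by exact_mod_cast v.pos) hcop
  rw [h]
  exact_mod_cast this

lemma den_inv_eq_num (u : ℚ) (hu : 0 < u) : ((u⁻¹).den : ℤ) = u.num := by
  have hnum : 0 < u.num := Rat.num_pos.mpr hu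
  have h : u⁻¹ = ((u.den : ℤ) : ℚ) / ((u.num : ℤ) : ℚ) := by
    conv_lhs => rw [← Rat.num_div_den u]
    rw [inv_div]
    norm_cast
  have hcop : Nat.Coprime ((u.den : ℤ)).natAbs u.num.natAbs := by
    simpa using u.reduced.symm
  rw [h]
  exact Rat.den_div_eq_of_coprime hnum hcop

lemma ncf_exists_strong : ∀ d : ℕ, ∀ v : ℚ, v.den = d → v < -1 →
    ∃ L, L ≠ [] ∧ (∀ s ∈ L, s ≤ -2) ∧ ncfVal L = v := by
  intro d
  induction d using Nat.strong_induction_on with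
  | _ d ih =>
    intro v hd hv
    have hfl : (⌊v⌋ : ℚ) ≤ v := Int.floor_le v
    have hfl2 : (⌊v⌋ : ℚ) < -1 := lt_of_le_of_lt hfl hv
    have hfl3 : ⌊v⌋ ≤ -2 := by
      have : ⌊v⌋ < -1 := by exact_mod_cast hfl2
      omega
    by_cases hint : v = (⌊v⌋ : ℚ)
    · exact ⟨[⌊v⌋], by simp, by simpa using hfl3, by rw [ncfVal_singleton]; exact hint.symm⟩
    · set u := v - (⌊v⌋ : ℚ) with hu
      have hflt : (⌊v⌋ : ℚ) < v := lt_of_le_of_ne hfl (fun h => hint h.symm)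
      have hu0 : 0 < u := by rw [hu]; linarith
      have hu1 : u < 1 := by rw [hu]; linarith [Int.lt_floor_add_one v]
      have huinv : 1 < 1 / u := (one_lt_div hu0).mpr hu1
      set w : ℚ := -(1 / u) with hw
      have hwlt : w < -1 := by rw [hw]; linarith
      have hwden : w.den < d := by
        have e1 : w.den = (u⁻¹).den := by rw [hw, one_div, Rat.den_neg_eq_den]
        have e2 : ((u⁻¹).den : ℤ) = u.num := den_inv_eq_num u hu0
        have e3 : u.den = v.den := den_sub_intCast v ⌊v⌋
        have e4 : u.num < (u.den : ℤ) := Rat.lt_one_iff_num_lt_denom.mpr hu1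
        have : ((w.den : ℤ)) < (d : ℤ) := by
          rw [e1, e2]; rw [e3, hd] at e4; exact_mod_cast e4
        exact_mod_cast this
      obtain ⟨L, hne, hL2, hLv⟩ := ih w.den hwden w rfl hwlt
      refine ⟨⌊v⌋ :: L, by simp, ?_, ?_⟩
      · intro s hs
        rcases List.mem_cons.mp hs with h | h
        · rw [h]; exact hfl3
        · exact hL2 s h
      · rcases L with _ | ⟨b, l⟩
        · exact absurd rfl hne
        · rw [ncfVal_cons_cons, hLv, hw]
          have hu0' : u ≠ 0 := ne_of_gt hu0
          field_simp
          rw [hu]; ring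

lemma ncf_exists (v : ℚ) (hv : v < 0) : ∃ L, Admissible L ∧ ncfVal L = v := by
  have hfl : (⌊v⌋ : ℚ) ≤ v := Int.floor_le v
  have hfl3 : ⌊v⌋ ≤ -1 := by
    have : (⌊v⌋ : ℚ) < 0 := lt_of_le_of_lt hfl hv
    have : ⌊v⌋ < 0 := by exact_mod_cast this
    omega
  by_cases hint : v = (⌊v⌋ : ℚ)
  · exact ⟨[⌊v⌋], ⟨hfl3, by simp⟩, by rw [ncfVal_singleton]; exact hint.symm⟩
  · set u := v - (⌊v⌋ : ℚ) with hu
    have hflt : (⌊v⌋ : ℚ) < v := lt_of_le_of_ne hfl (fun h => hint h.symm)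
    have hu0 : 0 < u := by rw [hu]; linarith
    have hu1 : u < 1 := by rw [hu]; linarith [Int.lt_floor_add_one v]
    have huinv : 1 < 1 / u := (one_lt_div hu0).mpr hu1
    set w : ℚ := -(1 / u) with hw
    have hwlt : w < -1 := by rw [hw]; linarith
    obtain ⟨L, hne, hL2, hLv⟩ := ncf_exists_strong w.den w rfl hwlt
    refine ⟨⌊v⌋ :: L, ⟨hfl3, hL2⟩, ?_⟩
    rcases L with _ | ⟨b, l⟩
    · exact absurd rfl hne
    · rw [ncfVal_cons_cons, hLv, hw]
      have hu0' : u ≠ 0 := ne_of_gt hu0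
      field_simp
      rw [hu]; ring

lemma headshift (a : ℤ) (l : List ℤ) :
    ncfVal ((a - 1) :: l) = ncfVal (a :: l) - 1 := by
  rcases l with _ | ⟨b, l⟩
  · rw [ncfVal_singleton, ncfVal_singleton]; push_cast; ring
  · rw [ncfVal_cons_cons, ncfVal_cons_cons]; push_cast; ring

lemma ncf_shift (L : List ℤ) (hL : Admissible L) (y : ℚ) (hy : 0 < y)
    (hv : ncfVal L = -1 / y) :
    ∃ L', Admissible L' ∧ ncfVal L' = -1 / (y + 1) ∧ ncfWeight L' = ncfWeight L := by
  rcases L with _ | ⟨a, l⟩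
  · exact hL.elim
  obtain ⟨ha, hl⟩ := hL
  refine ⟨-1 :: (a - 1) :: l, ⟨by norm_num, ?_⟩, ?_, ?_⟩
  · intro s hs
    rcases List.mem_cons.mp hs with h | h
    · rw [h]; omega
    · exact hl s h
  · rw [ncfVal_cons_cons, headshift, hv]
    have hy0 : y ≠ 0 := ne_of_gt hy
    have hy1 : y + 1 ≠ 0 := ne_of_gt (by linarith)
    have h1 : (-1 / y - 1 : ℚ) = -((y + 1) / y) := by field_simp; ring
    rw [h1, one_div, inv_neg, inv_div]
    push_cast
    field_simp; ring
  · simp only [ncfWeight, List.map_cons, List.prod_cons]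
    rw [show ((-1 : ℤ)) * ((a - 1 + 1) * ((List.map (· + 1) l).prod)) =
      -(a * (List.map (· + 1) l).prod) from by ring, abs_neg]

lemma ncf_shift_iter (k : ℕ) (L : List ℤ) (hL : Admissible L) (y : ℚ) (hy : 0 < y)
    (hv : ncfVal L = -1 / y) :
    ∃ L', Admissible L' ∧ ncfVal L' = -1 / (y + k) ∧ ncfWeight L' = ncfWeight L := by
  induction k with
  | zero => exact ⟨L, hL, by simpa using hv, rfl⟩
  | succ k ih =>
    obtain ⟨L', h1, h2, h3⟩ := ih
    obtain ⟨L'', g1, g2, g3⟩ := ncf_shift L' h1 (y + k) (by positivity) h2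
    refine ⟨L'', g1, ?_, by rw [g3, h3]⟩
    rw [g2]; push_cast; ring_nf

/-- The function `Φ` of the paper: for `x = p/q ∈ (0,1]`, `Φ(x)` is the weight
`|r₀ (r₁+1) ⋯ (rₙ+1)|` of the unique admissible list with NCF value `-q/p = -1/x`,
extended to all of `ℚ` by `Φ(r+1) = Φ(r)`; here `x = r - ⌈r⌉ + 1 ∈ (0,1]`. -/
noncomputable def Phi (r : ℚ) : ℤ :=
  letI := Classical.propDecidable
    (∃ L : List ℤ, Admissible L ∧ ncfVal L = -1 / (r - (⌈r⌉ : ℚ) + 1))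
  if h : ∃ L : List ℤ, Admissible L ∧ ncfVal L = -1 / (r - (⌈r⌉ : ℚ) + 1) then
    ncfWeight h.choose
  else 0

/-- The function `Ψ` of the paper. -/
noncomputable def Psi (r : ℚ) : ℤ :=
  if -3 ≤ r then 0 else Phi (-1 / (r + 3))

/-- For rational `r > 1`, `1/(1-r) < 0`, and the weight
`|r₀ (r₁+1) ⋯ (rₙ+1)|` of the unique admissible NCF expansion `[r₀, …, rₙ]` of
`1/(1-r)` equals `Φ(r)`. -/
theorem ncf_weight_eq_phi_of_one_lt (r : ℚ) (hr : 1 < r) :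
    1 / (1 - r) < 0 ∧
    ∀ L : List ℤ, Admissible L → ncfVal L = 1 / (1 - r) →
      ncfWeight L = Phi r := by
  constructor
  · exact one_div_neg.mpr (by linarith)
  · intro L hL hv
    have hx0 : 0 < r - (⌈r⌉ : ℚ) + 1 := by
      have := Int.ceil_lt_add_one r; linarith
    have hc2 : 2 ≤ ⌈r⌉ := by
      have : (1 : ℤ) < ⌈r⌉ := Int.lt_ceil.mpr (by exact_mod_cast hr)
      omega
    set k : ℕ := (⌈r⌉ - 2).toNat with hk
    have hkQ : (k : ℚ) = (⌈r⌉ : ℚ) - 2 := by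
      have : ((k : ℤ) : ℚ) = ((⌈r⌉ - 2 : ℤ) : ℚ) := by
        rw [hk, Int.toNat_of_nonneg (by omega)]
      push_cast at this
      linarith
    obtain ⟨M, hM, hMv⟩ := ncf_exists (-1 / (r - (⌈r⌉ : ℚ) + 1))
      (div_neg_of_neg_of_pos (by norm_num) hx0)
    obtain ⟨L', h1, h2, h3⟩ := ncf_shift_iter k M hM _ hx0 hMv
    have hxk : r - (⌈r⌉ : ℚ) + 1 + (k : ℚ) = r - 1 := by rw [hkQ]; ring
    have hval : ncfVal L' = 1 / (1 - r) := by
      rw [h2, hxk, neg_div, show (1 : ℚ) - r = -(r - 1) from by ring, div_neg]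
    have hLL' : L = L' := ncf_unique L L' hL h1 (by rw [hv, hval])
    have hex : ∃ L0 : List ℤ, Admissible L0 ∧ ncfVal L0 = -1 / (r - (⌈r⌉ : ℚ) + 1) :=
      ⟨M, hM, hMv⟩
    have hchoose : hex.choose = M := by
      obtain ⟨hadm, hval0⟩ := hex.choose_spec
      exact ncf_unique _ _ hadm hM (by rw [hval0, hMv])
    rw [hLL', h3, Phi, dif_pos hex, hchoose]
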